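/- If T is a bounded linear operator on a complex Hilbert space with Cartesian decomposition T = A + iB, then √(2(‖A‖⁴ + ‖B‖⁴)) ≤ 2 ω(T)². -/

import Mathlib

open scoped InnerProductSpace
open ContinuousLinearMap

variable {H : Type*} [NormedAddCommGroup H] [InnerProductSpace ℂ H] [CompleteSpace H]

/-- The numerical radius of a bounded operator. -/
noncomputable def numRadius (T : H →L[ℂ] H) : ℝ :=
  ⨆ x : {x : H // ‖x‖ = 1}, ‖⟪T x.1, x.1⟫_ℂ‖

/-- The absolute value |A| = (A*A)^(1/2). -/
noncomputable def opAbs (A : H →L[ℂ] H) : H →L[ℂ] H := CFC.sqrt (adjoint A * A)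

/-- Real part of the Cartesian decomposition. -/
noncomputable def reP (T : H →L[ℂ] H) : H →L[ℂ] H := (2:ℂ)⁻¹ • (T + adjoint T)

/-- Imaginary part of the Cartesian decomposition. -/
noncomputable def imP (T : H →L[ℂ] H) : H →L[ℂ] H := (2*Complex.I:ℂ)⁻¹ • (T - adjoint T)

lemma aux_norm_le {A : H →L[ℂ] H} (hA : IsSelfAdjoint A) {M : ℝ} (hM : 0 ≤ M)
    (h : ∀ x : H, ‖⟪A x, x⟫_ℂ‖ ≤ M * ‖x‖ ^ 2) : ‖A‖ ≤ M := by
  have hre : ∀ z : H, |Complex.re ⟪A z, z⟫_ℂ| ≤ M * ‖z‖ ^ 2 := fun z =>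
    (Complex.abs_re_le_norm _).trans (h z)
  have hpol : ∀ x y : H, 4 * Complex.re ⟪A x, y⟫_ℂ =
      Complex.re ⟪A (x + y), x + y⟫_ℂ - Complex.re ⟪A (x - y), x - y⟫_ℂ := by
    intro x y
    have e1 : ⟪A (x + y), x + y⟫_ℂ = ⟪A x, x⟫_ℂ + ⟪A x, y⟫_ℂ + ⟪A y, x⟫_ℂ + ⟪A y, y⟫_ℂ := by
      simp [map_add, inner_add_left, inner_add_right]; ring
    have e2 : ⟪A (x - y), x - y⟫_ℂ = ⟪A x, x⟫_ℂ - ⟪A x, y⟫_ℂ - ⟪A y, x⟫_ℂ + ⟪A y, y⟫_ℂ := by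
      simp [map_sub, inner_sub_left, inner_sub_right]; ring
    have hsy : Complex.re ⟪A y, x⟫_ℂ = Complex.re ⟪A x, y⟫_ℂ := by
      have h0 := hA.isSymmetric x y
      simp only [ContinuousLinearMap.coe_coe] at h0
      rw [← inner_conj_symm, ← h0, Complex.conj_re]
    rw [e1, e2]
    simp only [Complex.add_re, Complex.sub_re]
    rw [hsy]; ring
  refine A.opNorm_le_bound hM fun x => ?_
  by_cases hx : A x = 0
  · simp only [hx, norm_zero]; positivity
  have hAx : (0:ℝ) < ‖A x‖ := norm_pos_iff.mpr hx
  have hxn : (0:ℝ) < ‖x‖ := by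
    rcases eq_or_lt_of_le (norm_nonneg x) with h0 | h0
    · exact absurd (by simp [norm_eq_zero.mp h0.symm]) hx
    · exact h0
  set c : ℝ := ‖x‖ / ‖A x‖ with hc
  set y : H := (c : ℂ) • A x with hy
  have hyn : ‖y‖ = ‖x‖ := by
    rw [hy, norm_smul, Complex.norm_real, Real.norm_eq_abs,
      abs_of_nonneg (by positivity), hc, div_mul_cancel₀ _ hAx.ne']
  have h1 : Complex.re ⟪A x, y⟫_ℂ = ‖x‖ * ‖A x‖ := by
    rw [hy, inner_smul_right]
    simp only [Complex.mul_re, Complex.ofReal_re, Complex.ofReal_im, inner_self_im,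
      zero_mul, sub_zero, hc]
    rw [show (⟪A x, A x⟫_ℂ).re = ‖A x‖ ^ 2 by
      rw [← RCLike.re_to_complex]; exact inner_self_eq_norm_sq (A x)]
    field_simp
  have h3 : Complex.re ⟪A (x + y), x + y⟫_ℂ ≤ M * ‖x + y‖ ^ 2 :=
    (le_abs_self _).trans (hre _)
  have h4 : -(M * ‖x - y‖ ^ 2) ≤ Complex.re ⟪A (x - y), x - y⟫_ℂ :=
    neg_le_of_abs_le (hre _)
  have hpar : ‖x + y‖ ^ 2 + ‖x - y‖ ^ 2 = 4 * ‖x‖ ^ 2 := by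
    have hp := parallelogram_law_with_norm ℂ x y
    rw [hyn] at hp; nlinarith [hp]
  have hpar' : M * ‖x + y‖ ^ 2 + M * ‖x - y‖ ^ 2 = 4 * (M * ‖x‖ ^ 2) := by
    linear_combination M * hpar
  have key : ‖x‖ * ‖A x‖ ≤ M * ‖x‖ ^ 2 := by
    have := hpol x y
    rw [h1] at this
    linarith
  have : ‖x‖ * ‖A x‖ ≤ ‖x‖ * (M * ‖x‖) := by nlinarith [key]
  exact le_of_mul_le_mul_left this hxn

lemma numRadius_nonneg (T : H →L[ℂ] H) : 0 ≤ numRadius T :=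
  Real.iSup_nonneg fun x => norm_nonneg _

lemma inner_abs_le_numRadius (T : H →L[ℂ] H) {x : H} (hx : ‖x‖ = 1) :
    ‖⟪T x, x⟫_ℂ‖ ≤ numRadius T := by
  have hbdd : BddAbove (Set.range fun x : {x : H // ‖x‖ = 1} =>
      ‖⟪T x.1, x.1⟫_ℂ‖) := by
    refine ⟨‖T‖, ?_⟩
    rintro _ ⟨z, rfl⟩
    calc ‖⟪T z.1, z.1⟫_ℂ‖ ≤ ‖T z.1‖ * ‖z.1‖ := by
          exact norm_inner_le_norm _ _
      _ ≤ ‖T‖ * ‖z.1‖ * ‖z.1‖ := by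
          have := T.le_opNorm z.1
          nlinarith [norm_nonneg z.1]
      _ = ‖T‖ := by rw [z.2]; ring
  exact le_ciSup hbdd (⟨x, hx⟩ : {x : H // ‖x‖ = 1})

lemma reP_norm_le (T : H →L[ℂ] H) : ‖reP T‖ ≤ numRadius T := by
  have hsa : IsSelfAdjoint (reP T) := by
    rw [reP, isSelfAdjoint_iff', map_smulₛₗ, map_add, adjoint_adjoint]
    rw [show (starRingEnd ℂ) (2:ℂ)⁻¹ = (2:ℂ)⁻¹ by simp [Complex.ext_iff], add_comm]
  refine aux_norm_le hsa (numRadius_nonneg T) fun x => ?_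
  -- reduce to unit vectors
  by_cases hx : x = 0
  · simp [hx]
  have hxn : (0:ℝ) < ‖x‖ := norm_pos_iff.mpr hx
  have hval : ∀ z : H, ⟪reP T z, z⟫_ℂ = (((⟪T z, z⟫_ℂ).re : ℝ) : ℂ) := by
    intro z
    rw [reP]
    simp only [ContinuousLinearMap.smul_apply, ContinuousLinearMap.add_apply,
      inner_smul_left, inner_add_left, adjoint_inner_left]
    rw [show ⟪z, T z⟫_ℂ = (starRingEnd ℂ) ⟪T z, z⟫_ℂ from (inner_conj_symm _ _).symm]
    rw [Complex.add_conj]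
    simp [Complex.ext_iff]
  set u : H := ((‖x‖⁻¹ : ℝ) : ℂ) • x with hu
  have hun : ‖u‖ = 1 := by
    rw [hu, norm_smul, Complex.norm_real, Real.norm_eq_abs, abs_of_nonneg (by positivity),
      inv_mul_cancel₀ hxn.ne']
  have hscale : ‖⟪reP T x, x⟫_ℂ‖ = ‖x‖ ^ 2 * ‖⟪reP T u, u⟫_ℂ‖ := by
    rw [hu]
    simp only [ContinuousLinearMap.map_smul, inner_smul_left, inner_smul_right, map_mul,
      norm_mul, Complex.norm_conj, Complex.norm_real, Real.norm_eq_abs, abs_of_nonneg (le_of_lt (inv_pos.mpr hxn))]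
    field_simp
  have hb : ‖⟪reP T u, u⟫_ℂ‖ ≤ numRadius T := by
    calc ‖⟪reP T u, u⟫_ℂ‖ = |(⟪T u, u⟫_ℂ).re| := by rw [hval u, Complex.norm_real, Real.norm_eq_abs]
      _ ≤ ‖⟪T u, u⟫_ℂ‖ := Complex.abs_re_le_norm _
      _ ≤ numRadius T := inner_abs_le_numRadius T hun
  calc ‖⟪reP T x, x⟫_ℂ‖ = ‖x‖ ^ 2 * ‖⟪reP T u, u⟫_ℂ‖ := hscale
    _ ≤ ‖x‖ ^ 2 * numRadius T := by nlinarith [hb, sq_nonneg ‖x‖]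
    _ = numRadius T * ‖x‖ ^ 2 := by ring

lemma imP_norm_le (T : H →L[ℂ] H) : ‖imP T‖ ≤ numRadius T := by
  have hsa : IsSelfAdjoint (imP T) := by
    rw [imP, isSelfAdjoint_iff', map_smulₛₗ, map_sub, adjoint_adjoint]
    rw [show (starRingEnd ℂ) (2*Complex.I)⁻¹ = -(2*Complex.I)⁻¹ by simp [Complex.ext_iff],
      neg_smul, ← smul_neg, neg_sub]
  refine aux_norm_le hsa (numRadius_nonneg T) fun x => ?_
  by_cases hx : x = 0
  · simp [hx]
  have hxn : (0:ℝ) < ‖x‖ := norm_pos_iff.mpr hx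
  have hval : ∀ z : H, ⟪imP T z, z⟫_ℂ = ((-(⟪T z, z⟫_ℂ).im : ℝ) : ℂ) := by
    intro z
    rw [imP]
    simp only [ContinuousLinearMap.smul_apply, ContinuousLinearMap.sub_apply,
      inner_smul_left, inner_sub_left, adjoint_inner_left]
    rw [show ⟪z, T z⟫_ℂ = (starRingEnd ℂ) ⟪T z, z⟫_ℂ from (inner_conj_symm _ _).symm]
    rw [Complex.sub_conj]
    simp [Complex.ext_iff]
  set u : H := ((‖x‖⁻¹ : ℝ) : ℂ) • x with hu
  have hun : ‖u‖ = 1 := by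
    rw [hu, norm_smul, Complex.norm_real, Real.norm_eq_abs, abs_of_nonneg (by positivity),
      inv_mul_cancel₀ hxn.ne']
  have hscale : ‖⟪imP T x, x⟫_ℂ‖ = ‖x‖ ^ 2 * ‖⟪imP T u, u⟫_ℂ‖ := by
    rw [hu]
    simp only [ContinuousLinearMap.map_smul, inner_smul_left, inner_smul_right, map_mul,
      norm_mul, Complex.norm_conj, Complex.norm_real, Real.norm_eq_abs, abs_of_nonneg (le_of_lt (inv_pos.mpr hxn))]
    field_simp
  have hb : ‖⟪imP T u, u⟫_ℂ‖ ≤ numRadius T := by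
    calc ‖⟪imP T u, u⟫_ℂ‖ = |(⟪T u, u⟫_ℂ).im| := by
          rw [hval u, Complex.norm_real, Real.norm_eq_abs, abs_neg]
      _ ≤ ‖⟪T u, u⟫_ℂ‖ := Complex.abs_im_le_norm _
      _ ≤ numRadius T := inner_abs_le_numRadius T hun
  calc ‖⟪imP T x, x⟫_ℂ‖ = ‖x‖ ^ 2 * ‖⟪imP T u, u⟫_ℂ‖ := hscale
    _ ≤ ‖x‖ ^ 2 * numRadius T := by nlinarith [hb, sq_nonneg ‖x‖]
    _ = numRadius T * ‖x‖ ^ 2 := by ring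

theorem stmt_17 (T : H →L[ℂ] H) :
    Real.sqrt (2 * (‖reP T‖ ^ 4 + ‖imP T‖ ^ 4)) ≤ 2 * numRadius T ^ 2 := by
  set w := numRadius T with hw
  have hw0 : 0 ≤ w := numRadius_nonneg T
  have ha := reP_norm_le T
  have hb := imP_norm_le T
  have ha0 : 0 ≤ ‖reP T‖ := norm_nonneg _
  have hb0 : 0 ≤ ‖imP T‖ := norm_nonneg _
  have h1 : 2 * (‖reP T‖ ^ 4 + ‖imP T‖ ^ 4) ≤ (2 * w ^ 2) ^ 2 := by
    have h2 : ‖reP T‖ ^ 4 ≤ w ^ 4 := pow_le_pow_left₀ ha0 ha 4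
    have h3 : ‖imP T‖ ^ 4 ≤ w ^ 4 := pow_le_pow_left₀ hb0 hb 4
    nlinarith [h2, h3]
  calc Real.sqrt (2 * (‖reP T‖ ^ 4 + ‖imP T‖ ^ 4)) ≤ Real.sqrt ((2 * w ^ 2) ^ 2) :=
        Real.sqrt_le_sqrt h1
    _ = 2 * w ^ 2 := Real.sqrt_sq (by positivity)
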